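/- Let S : ℝ → ℝ be continuous with S(0) = 0, strictly increasing on (−∞, a_1) and on (b_1, ∞), and strictly decreasing on (a_1, b_1), where 0 ≤ a_1 < b_1. Then the Pitman transform TS(x) = 2M(x) − S(x) − 2M(0) (where M(x) = sup_{y≤x} S(y)) is strictly increasing on (−∞, b_1), and there exists ε > 0 such that TS is strictly decreasing on (b_1, b_1 + ε). In particular the first local maximum of TS on [0,∞) is at b_1. -/
import Mathlib


noncomputable def pastMax (S : ℝ → ℝ) (x : ℝ) : ℝ := sSup (S '' Set.Iic x)

noncomputable def pitman (S : ℝ → ℝ) (x : ℝ) : ℝ :=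
  2 * pastMax S x - S x - 2 * pastMax S 0

theorem pitman_one_soliton (S : ℝ → ℝ) (hS : Continuous S) (h0 : S 0 = 0)
    (a₁ b₁ : ℝ) (ha₁ : 0 ≤ a₁) (hab : a₁ < b₁)
    (hinc₁ : StrictMonoOn S (Set.Iic a₁))
    (hdec : StrictAntiOn S (Set.Icc a₁ b₁))
    (hinc₂ : StrictMonoOn S (Set.Ici b₁)) :
    StrictMonoOn (pitman S) (Set.Iic b₁) ∧
    (∃ ε > 0, StrictAntiOn (pitman S) (Set.Icc b₁ (b₁ + ε))) ∧
    IsLocalMax (pitman S) b₁ := by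
  -- pastMax on (-∞, a₁]
  have hA : ∀ x ≤ a₁, pastMax S x = S x := by
    intro x hx
    apply IsGreatest.csSup_eq
    constructor
    · exact ⟨x, le_refl x, rfl⟩
    · rintro _ ⟨y, hy, rfl⟩
      exact hinc₁.monotoneOn (le_trans hy hx) hx hy
  -- pastMax = S a₁ whenever S ≤ S a₁ on [a₁, x]
  have hB : ∀ x, a₁ ≤ x → (∀ y ∈ Set.Icc a₁ x, S y ≤ S a₁) → pastMax S x = S a₁ := by
    intro x hx hub
    apply IsGreatest.csSup_eq
    constructor
    · exact ⟨a₁, hx, rfl⟩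
    · rintro _ ⟨y, hy, rfl⟩
      rcases le_or_gt y a₁ with h | h
      · exact hinc₁.monotoneOn h (le_refl a₁) h
      · exact hub y ⟨h.le, hy⟩
  have hub_b : ∀ x ∈ Set.Icc a₁ b₁, S x ≤ S a₁ := by
    intro x hx
    exact hdec.antitoneOn ⟨le_refl a₁, hab.le⟩ hx hx.1
  have hP1 : ∀ x ∈ Set.Icc a₁ b₁, pastMax S x = S a₁ := by
    intro x hx
    exact hB x hx.1 (fun y hy => hub_b y ⟨hy.1, hy.2.trans hx.2⟩)
  have hM0 : pastMax S 0 = 0 := by rw [hA 0 ha₁, h0]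
  -- pitman formulas
  have hpit1 : ∀ x ≤ a₁, pitman S x = S x := by
    intro x hx; unfold pitman; rw [hA x hx, hM0]; ring
  have hSb : S b₁ < S a₁ := hdec ⟨le_refl a₁, hab.le⟩ ⟨hab.le, le_refl b₁⟩ hab
  -- choose δ so that S < S a₁ near b₁
  have hev : ∀ᶠ y in nhds b₁, S y < S a₁ :=
    hS.continuousAt.eventually_lt continuousAt_const hSb
  obtain ⟨δ, hδ, hδS⟩ := Metric.eventually_nhds_iff.mp hev
  set ε := δ / 2 with hε
  have hεpos : 0 < ε := by positivity
  have hnear : ∀ y, b₁ ≤ y → y ≤ b₁ + ε → S y < S a₁ := by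
    intro y h1 h2
    apply hδS
    rw [Real.dist_eq, abs_of_nonneg (by linarith)]
    linarith
  have hP2 : ∀ x ∈ Set.Icc b₁ (b₁ + ε), pastMax S x = S a₁ := by
    intro x hx
    apply hB x (hab.le.trans hx.1)
    intro y hy
    rcases le_or_gt y b₁ with h | h
    · exact hub_b y ⟨hy.1, h⟩
    · exact (hnear y h.le (hy.2.trans hx.2)).le
  have hpit2 : ∀ x ∈ Set.Icc a₁ b₁, pitman S x = 2 * S a₁ - S x := by
    intro x hx; unfold pitman; rw [hP1 x hx, hM0]; ring
  have hpit3 : ∀ x ∈ Set.Icc b₁ (b₁ + ε), pitman S x = 2 * S a₁ - S x := by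
    intro x hx; unfold pitman; rw [hP2 x hx, hM0]; ring
  have mono : StrictMonoOn (pitman S) (Set.Iic b₁) := by
    intro x hx y hy hxy
    rcases le_or_gt y a₁ with h | h
    · rw [hpit1 x (hxy.le.trans h), hpit1 y h]
      exact hinc₁ (hxy.le.trans h) h hxy
    · have hyv : pitman S y = 2 * S a₁ - S y := hpit2 y ⟨h.le, hy⟩
      rcases le_or_gt x a₁ with h2 | h2
      · rw [hpit1 x h2, hyv]
        have hSy : S y < S a₁ := hdec ⟨le_refl a₁, hab.le⟩ ⟨h.le, hy⟩ h
        have hSx : S x ≤ S a₁ := hinc₁.monotoneOn h2 (le_refl a₁) h2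
        linarith
      · rw [hpit2 x ⟨h2.le, hxy.le.trans hy⟩, hyv]
        have : S y < S x := hdec ⟨h2.le, hxy.le.trans hy⟩ ⟨h.le, hy⟩ hxy
        linarith
  have anti : StrictAntiOn (pitman S) (Set.Icc b₁ (b₁ + ε)) := by
    intro x hx y hy hxy
    rw [hpit3 x hx, hpit3 y hy]
    have : S x < S y := hinc₂ hx.1 hy.1 hxy
    linarith
  refine ⟨mono, ⟨ε, hεpos, anti⟩, ?_⟩
  have hmem : Set.Ioo (b₁ - 1) (b₁ + ε) ∈ nhds b₁ :=
    Ioo_mem_nhds (by linarith) (by linarith)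
  refine Filter.eventually_of_mem hmem (fun z hz => ?_)
  rcases le_or_gt z b₁ with h | h
  · rcases eq_or_lt_of_le h with rfl | h'
    · exact le_refl _
    · exact (mono h (le_refl b₁) h').le
  · exact (anti ⟨le_refl b₁, by linarith⟩ ⟨h.le, hz.2.le⟩ h).le
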